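/- Let K be a compact linearly ordered topological space and let G : K → ℝ be a regulated function, meaning that at every point x that is not left-isolated the left limit lim_{y↗x} G(y) exists, and at every point x that is not right-isolated we have lim_{y↘x} G(y) = G(x). Then for every ε > 0 there exists a step function S : K → ℝ (a function constant on each open interval of some finite division 0_K = s_0 < s_1 < ⋯ < s_n = 1_K) with sup_{x∈K} |G(x) − S(x)| < ε. -/

import Mathlib

open Filter Topology

/-- A step function on a compact line `K` with minimum `⊥` and maximum `⊤`:
there is a finite division `⊥ = s 0 ≤ s 1 ≤ ⋯ ≤ s n = ⊤` such that the
function is constant on each open interval `(s k, s (k+1))`. -/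
def IsStepFunction {K : Type*} [LinearOrder K] [OrderBot K] [OrderTop K]
    (S : K → ℝ) : Prop :=
  ∃ (n : ℕ) (s : Fin (n + 1) → K), Monotone s ∧ s 0 = ⊥ ∧ s (Fin.last n) = ⊤ ∧
    ∀ i : Fin n, ∀ x ∈ Set.Ioo (s i.castSucc) (s i.succ),
      ∀ y ∈ Set.Ioo (s i.castSucc) (s i.succ), S x = S y

/-- `G : K → ℝ` is regulated: at every point that is not left-isolated the left
limit of `G` exists, and at every point that is not right-isolated `G` is
right-continuous. -/
def Regulated {K : Type*} [LinearOrder K] [TopologicalSpace K] (G : K → ℝ) : Prop :=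
  (∀ x : K, (𝓝[<] x).NeBot → ∃ l : ℝ, Filter.Tendsto G (𝓝[<] x) (𝓝 l)) ∧
  (∀ x : K, (𝓝[>] x).NeBot → Filter.Tendsto G (𝓝[>] x) (𝓝 (G x)))

section PartAux
variable {K : Type*} [LinearOrder K] [OrderBot K]

/-- There is a partition `⊥ = s 0 ≤ ⋯ ≤ s n = b` such that the oscillation of `G`
on each open interval is `< ε`. -/
def StepPart (G : K → ℝ) (ε : ℝ) (b : K) : Prop :=
  ∃ (n : ℕ) (s : Fin (n + 1) → K), Monotone s ∧ s 0 = ⊥ ∧ s (Fin.last n) = b ∧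
    ∀ i : Fin n, ∀ x ∈ Set.Ioo (s i.castSucc) (s i.succ),
      ∀ y ∈ Set.Ioo (s i.castSucc) (s i.succ), |G x - G y| < ε

lemma stepPart_bot (G : K → ℝ) (ε : ℝ) : StepPart G ε ⊥ :=
  ⟨0, fun _ => ⊥, monotone_const, rfl, rfl, fun i => i.elim0⟩

lemma StepPart.append {G : K → ℝ} {ε : ℝ} {b u : K} (h : StepPart G ε b) (hbu : b ≤ u)
    (hosc : ∀ x ∈ Set.Ioo b u, ∀ y ∈ Set.Ioo b u, |G x - G y| < ε) : StepPart G ε u := by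
  obtain ⟨n, s, hmono, h0, hlast, hstep⟩ := h
  refine ⟨n + 1, Fin.snoc s u, ?_, ?_, ?_, ?_⟩
  · rw [Fin.monotone_iff_le_succ]
    intro i
    induction i using Fin.lastCases with
    | last =>
      rw [Fin.succ_last, Fin.snoc_castSucc, Fin.snoc_last, hlast]
      exact hbu
    | cast j =>
      rw [Fin.succ_castSucc, Fin.snoc_castSucc, Fin.snoc_castSucc]
      exact hmono (Fin.castSucc_lt_succ : j.castSucc < j.succ).le
  · rw [show (0 : Fin (n+2)) = Fin.castSucc 0 by simp, Fin.snoc_castSucc]; exact h0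
  · rw [Fin.snoc_last]
  · intro i
    induction i using Fin.lastCases with
    | last =>
      rw [Fin.succ_last, Fin.snoc_last, Fin.snoc_castSucc, hlast]
      exact hosc
    | cast j =>
      rw [Fin.succ_castSucc, Fin.snoc_castSucc, Fin.snoc_castSucc]
      exact hstep j
end PartAux

lemma stepPart_top_step {K : Type*} [LinearOrder K] [OrderBot K] [OrderTop K]
    {G : K → ℝ} {ε : ℝ} (hε : 0 < ε) (h : StepPart G ε ⊤) :
    ∃ S : K → ℝ, IsStepFunction S ∧ ∀ x : K, |G x - S x| < ε := by
  classical
  obtain ⟨n, s, hmono, h0, hlast, hstep⟩ := h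
  -- unique interval containing a point
  have huniq : ∀ i j : Fin n, ∀ x : K, x ∈ Set.Ioo (s i.castSucc) (s i.succ) →
      x ∈ Set.Ioo (s j.castSucc) (s j.succ) → i = j := by
    have key : ∀ i j : Fin n, i < j → ∀ x : K, x ∈ Set.Ioo (s i.castSucc) (s i.succ) →
        x ∈ Set.Ioo (s j.castSucc) (s j.succ) → False := by
      intro i j hij x hxi hxj
      have hle : s i.succ ≤ s j.castSucc := by
        apply hmono
        simp only [Fin.le_def, Fin.val_succ, Fin.coe_castSucc]
        exact hij
      exact absurd ((hxi.2.trans_le hle).trans hxj.1) (lt_irrefl x)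
    intro i j x hxi hxj
    rcases lt_trichotomy i j with h' | h' | h'
    · exact absurd (key i j h' x hxi hxj) not_false
    · exact h'
    · exact absurd (key j i h' x hxj hxi) not_false
  set c : Fin n → ℝ := fun i =>
    if h : (Set.Ioo (s i.castSucc) (s i.succ)).Nonempty then G h.choose else 0 with hc
  set S : K → ℝ := fun x =>
    if h : ∃ i : Fin n, x ∈ Set.Ioo (s i.castSucc) (s i.succ) then c h.choose else G x with hS
  have hSval : ∀ i : Fin n, ∀ x ∈ Set.Ioo (s i.castSucc) (s i.succ), S x = c i := by
    intro i x hx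
    have hex : ∃ j : Fin n, x ∈ Set.Ioo (s j.castSucc) (s j.succ) := ⟨i, hx⟩
    have : hex.choose = i := huniq _ _ x hex.choose_spec hx
    simp only [hS, dif_pos hex, this]
  refine ⟨S, ⟨n, s, hmono, h0, hlast, ?_⟩, ?_⟩
  · intro i x hx y hy
    rw [hSval i x hx, hSval i y hy]
  · intro x
    by_cases hex : ∃ i : Fin n, x ∈ Set.Ioo (s i.castSucc) (s i.succ)
    · obtain ⟨i, hx⟩ := hex
      rw [hSval i x hx]
      have hne : (Set.Ioo (s i.castSucc) (s i.succ)).Nonempty := ⟨x, hx⟩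
      have : c i = G hne.choose := by simp only [hc, dif_pos hne]
      rw [this]
      exact hstep i x hx _ hne.choose_spec
    · simp only [hS, dif_neg hex, sub_self, abs_zero]
      exact hε

/-- A regulated function on a compact line can be uniformly approximated by
step functions: for every `ε > 0` there is a step function `S` with
`|G x − S x| < ε` for every `x`. -/
theorem stmt2 {K : Type*} [LinearOrder K] [TopologicalSpace K] [OrderTopology K]
    [CompactSpace K] [Nonempty K] [OrderBot K] [OrderTop K]
    (G : K → ℝ) (hG : Regulated G) :
    ∀ ε : ℝ, 0 < ε → ∃ S : K → ℝ, IsStepFunction S ∧ ∀ x : K, |G x - S x| < ε := by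
  intro ε hε
  have hε2 : 0 < ε / 2 := by positivity
  set A : Set K := {b | StepPart G ε b} with hA
  have hbot : ⊥ ∈ A := stepPart_bot G ε
  obtain ⟨c, hcc, hclosLUB⟩ :=
    (isClosed_closure (s := A)).isCompact.exists_isLUB ⟨⊥, subset_closure hbot⟩
  have hcA : IsLUB A c := by
    constructor
    · exact fun a ha => hclosLUB.1 (subset_closure ha)
    · intro d hd
      refine hclosLUB.2 ?_
      intro x hx
      exact isClosed_Iic.closure_subset_iff.2 (fun a ha => hd ha) hx
  -- oscillation control: pairwise bound from being in an ε/2-ball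
  have osc : ∀ (l : ℝ) (T : Set K), T ⊆ G ⁻¹' Metric.ball l (ε / 2) →
      ∀ x ∈ T, ∀ y ∈ T, |G x - G y| < ε := by
    intro l T hT x hx y hy
    have h1 : |G x - l| < ε / 2 := by
      have := hT hx; rwa [Set.mem_preimage, Metric.mem_ball, Real.dist_eq] at this
    have h2 : |G y - l| < ε / 2 := by
      have := hT hy; rwa [Set.mem_preimage, Metric.mem_ball, Real.dist_eq] at this
    have h3 : |G x - G y| ≤ |G x - l| + |l - G y| := abs_sub_le _ _ _
    rw [abs_sub_comm l (G y)] at h3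
    linarith
  -- c ∈ A
  have hcmem : c ∈ A := by
    by_contra hc'
    have hAlt : A ⊆ Set.Iio c := fun a ha =>
      lt_of_le_of_ne (hcA.1 ha) (fun h => hc' (h ▸ ha))
    have hne : (𝓝[<] c).NeBot :=
      (hcA.nhdsWithin_neBot ⟨⊥, hbot⟩).mono (nhdsWithin_mono c hAlt)
    obtain ⟨l, hl⟩ := hG.1 c hne
    have hs' : G ⁻¹' Metric.ball l (ε / 2) ∈ 𝓝[<] c :=
      hl (Metric.ball_mem_nhds l hε2)
    obtain ⟨y, hy⟩ : (Set.Iio c).Nonempty :=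
      Filter.nonempty_of_mem (self_mem_nhdsWithin (a := c) (s := Set.Iio c))
    obtain ⟨a, ha, haIoo⟩ := (mem_nhdsLT_iff_exists_Ioo_subset' hy).1 hs'
    obtain ⟨b, hbA, hab⟩ : ∃ b ∈ A, a < b := by
      by_contra hcon
      push_neg at hcon
      exact absurd (hcA.2 fun z hz => not_lt.1 fun h => absurd h (by simpa using hcon z hz))
        (not_le.2 ha)
    have hbc : b < c := hAlt hbA
    refine hc' (StepPart.append hbA hbc.le ?_)
    intro x hx y' hy'
    exact osc l (Set.Ioo b c)
      (fun z hz => haIoo ⟨hab.trans hz.1, hz.2⟩) x hx y' hy'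
  -- c = ⊤
  have hctop : c = ⊤ := by
    by_contra hc'
    have hclt : c < ⊤ := lt_of_le_of_ne le_top hc'
    have hs' : G ⁻¹' Metric.ball (G c) (ε / 2) ∈ 𝓝[>] c := by
      by_cases hnb : (𝓝[>] c).NeBot
      · exact hG.2 c hnb (Metric.ball_mem_nhds _ hε2)
      · rw [Filter.not_neBot] at hnb
        rw [hnb]; exact Filter.mem_bot
    obtain ⟨u, hu, huIoo⟩ := (mem_nhdsGT_iff_exists_Ioo_subset' hclt).1 hs'
    have huA : u ∈ A := StepPart.append hcmem (le_of_lt hu) (osc (G c) _ huIoo)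
    exact absurd (hcA.1 huA) (not_le.2 hu)
  exact stepPart_top_step hε (hctop ▸ hcmem)
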